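/- Fix a finite set P of predicate symbols (each with a finite arity) and a finite set C of constant symbols, and a natural number k. Up to logical equivalence, there are only finitely many existentially closed conjunctions of atoms over P and C each of whose connected components contains at most k distinct variables. -/

import Mathlib

/-- A relational atom over predicates `P`, variables `V` and constants `C`. -/
structure Atom (P V C : Type*) where
  pred : P
  args : List (V ⊕ C)
deriving DecidableEq

/-- The variables occurring in an atom. -/
def Atom.vars {P V C : Type*} (a : Atom P V C) : Set V := {v | Sum.inl v ∈ a.args}

/-- The variables occurring in a finite conjunction of atoms. -/
def varsFS {P V C : Type*} (F : Finset (Atom P V C)) : Set V :=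
  {v | ∃ a ∈ F, v ∈ a.vars}

/-- Connectivity of variables in the variable-hypergraph of `F`:
reflexive-transitive closure of co-occurrence in an atom. -/
def connR {P V C : Type*} (F : Finset (Atom P V C)) : V → V → Prop :=
  Relation.ReflTransGen (fun u v : V => ∃ a ∈ F, u ∈ a.vars ∧ v ∈ a.vars)

/-- A first-order structure for the signature. -/
structure Interp (P C : Type*) where
  Dom : Type
  nonempty : Nonempty Dom
  rel : P → List Dom → Prop
  const : C → Dom

/-- Satisfaction of an atom under a variable assignment. -/
def Interp.holdsAtom {P C V : Type*} (M : Interp P C) (σ : V → M.Dom)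
    (a : Atom P V C) : Prop :=
  M.rel a.pred (a.args.map (Sum.elim σ M.const))

/-- Satisfaction of the existential closure of a conjunction of atoms. -/
def Interp.satCQ {P C V : Type*} (M : Interp P C) (F : Finset (Atom P V C)) : Prop :=
  ∃ σ : V → M.Dom, ∀ a ∈ F, M.holdsAtom σ a

/-- Logical equivalence of two existentially closed conjunctions of atoms. -/
def equivCQ {P V C : Type*} (F G : Finset (Atom P V C)) : Prop :=
  ∀ M : Interp P C, M.satCQ F ↔ M.satCQ G

namespace CQAux

variable {P V V' C : Type*}

/-- Rename variables in an atom. -/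
def mapAtom (r : V → V') (a : Atom P V C) : Atom P V' C :=
  ⟨a.pred, a.args.map (Sum.map r id)⟩

lemma mem_varsFS {F : Finset (Atom P V C)} {v : V} :
    v ∈ varsFS F ↔ ∃ a ∈ F, v ∈ a.vars := Iff.rfl

lemma mem_vars_mapAtom {r : V → V'} {a : Atom P V C} {v : V'} :
    v ∈ (mapAtom r a).vars ↔ ∃ u ∈ a.vars, r u = v := by
  simp only [Atom.vars, Set.mem_setOf_eq, mapAtom, List.mem_map]
  constructor
  · rintro ⟨x, hx, hxe⟩
    cases x with
    | inl u => exact ⟨u, hx, by simpa using hxe⟩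
    | inr c => simp at hxe
  · rintro ⟨u, hu, rfl⟩
    exact ⟨Sum.inl u, hu, rfl⟩

lemma varsFS_mono {F G : Finset (Atom P V C)} (h : F ⊆ G) : varsFS F ⊆ varsFS G := by
  rintro v ⟨a, ha, hv⟩; exact ⟨a, h ha, hv⟩

lemma vars_finite (a : Atom P V C) : a.vars.Finite := by
  have h : a.vars = Sum.inl ⁻¹' {x | x ∈ a.args} := rfl
  rw [h]
  exact (a.args.finite_toSet).preimage (Sum.inl_injective.injOn)

lemma varsFS_finite (F : Finset (Atom P V C)) : (varsFS F).Finite := by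
  have h : varsFS F = ⋃ a ∈ F, a.vars := by
    ext v; simp [mem_varsFS]
  rw [h]
  exact F.finite_toSet.biUnion fun a _ => vars_finite a

lemma holdsAtom_congr (M : Interp P C) {σ σ' : V → M.Dom} {a : Atom P V C}
    (h : ∀ v ∈ a.vars, σ v = σ' v) : M.holdsAtom σ a ↔ M.holdsAtom σ' a := by
  unfold Interp.holdsAtom
  rw [List.map_congr_left (g := Sum.elim σ' M.const) ?_]
  rintro (v | c) hx
  · exact h v hx
  · rfl

lemma holdsAtom_map (M : Interp P C) (σ' : V' → M.Dom) (r : V → V') (a : Atom P V C) :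
    M.holdsAtom σ' (mapAtom r a) ↔ M.holdsAtom (σ' ∘ r) a := by
  have h : (a.args.map (Sum.map r id)).map (Sum.elim σ' M.const)
      = a.args.map (Sum.elim (σ' ∘ r) M.const) := by
    rw [List.map_map]
    apply List.map_congr_left
    rintro (v | c) _ <;> rfl
  unfold Interp.holdsAtom mapAtom
  rw [h]

/-- Renaming with a one-sided inverse on the variables preserves satisfiability. -/
lemma satCQ_image_map [DecidableEq (Atom P V' C)] (M : Interp P C)
    (F : Finset (Atom P V C)) (r : V → V') (s : V' → V)
    (hs : ∀ v ∈ varsFS F, s (r v) = v) :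
    M.satCQ (F.image (mapAtom r)) ↔ M.satCQ F := by
  constructor
  · rintro ⟨σ', h⟩
    exact ⟨σ' ∘ r, fun a ha => (holdsAtom_map M σ' r a).mp (h _ (Finset.mem_image_of_mem _ ha))⟩
  · rintro ⟨σ, h⟩
    refine ⟨σ ∘ s, fun b hb => ?_⟩
    obtain ⟨a, ha, rfl⟩ := Finset.mem_image.mp hb
    rw [holdsAtom_map]
    have hcongr : ∀ v ∈ a.vars, ((σ ∘ s) ∘ r) v = σ v :=
      fun v hv => congrArg σ (hs v ⟨a, ha, hv⟩)
    exact (holdsAtom_congr M hcongr).mpr (h a ha)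

/-- Satisfiability of a union of variable-disjoint pieces decomposes. -/
lemma satCQ_biUnion {ι : Type*} [DecidableEq (Atom P V C)] (M : Interp P C)
    (I : Finset ι) (f : ι → Finset (Atom P V C))
    (hdisj : ∀ i ∈ I, ∀ j ∈ I, i ≠ j →
      ∀ v, v ∈ varsFS (f i) → v ∈ varsFS (f j) → False) :
    M.satCQ (I.biUnion f) ↔ ∀ i ∈ I, M.satCQ (f i) := by
  classical
  haveI := M.nonempty
  constructor
  · rintro ⟨σ, h⟩ i hi
    exact ⟨σ, fun a ha => h a (Finset.mem_biUnion.mpr ⟨i, hi, ha⟩)⟩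
  · intro h
    have hch : ∀ i, ∃ σ : V → M.Dom, i ∈ I → ∀ a ∈ f i, M.holdsAtom σ a := by
      intro i
      by_cases hi : i ∈ I
      · obtain ⟨σ, hσ⟩ := h i hi
        exact ⟨σ, fun _ => hσ⟩
      · exact ⟨fun _ => Classical.arbitrary _, fun h' => absurd h' hi⟩
    choose g hg using hch
    refine ⟨fun v => if hv : ∃ i, i ∈ I ∧ v ∈ varsFS (f i) then g hv.choose v
      else Classical.arbitrary _, ?_⟩
    intro a ha
    obtain ⟨i, hi, hai⟩ := Finset.mem_biUnion.mp ha
    refine (holdsAtom_congr M ?_).mpr (hg i hi a hai)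
    intro v hv
    have hex : ∃ j, j ∈ I ∧ v ∈ varsFS (f j) := ⟨i, hi, ⟨a, hai, hv⟩⟩
    show (if hv : ∃ j, j ∈ I ∧ v ∈ varsFS (f j) then g hv.choose v
      else Classical.arbitrary _) = g i v
    rw [dif_pos hex]
    obtain ⟨hj, hvj⟩ := hex.choose_spec
    by_cases hji : hex.choose = i
    · rw [hji]
    · exact absurd (hdisj _ hj _ hi hji v hvj ⟨a, hai, hv⟩) (fun h => h)

end CQAux

open CQAux in
/-- over a finite set of predicates (each with a finite arity) and
a finite set of constants, there are, up to logical equivalence, only finitely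
many existentially closed conjunctions of atoms whose connected components each
contain at most `k` distinct variables. -/
theorem stmt4 {P C : Type} [Fintype P] [DecidableEq P] [Fintype C] [DecidableEq C]
    (arity : P → ℕ) (k : ℕ) :
    ∃ L : Finset (Finset (Atom P ℕ C)),
      ∀ F : Finset (Atom P ℕ C),
        (∀ a ∈ F, a.args.length = arity a.pred) →
        (∀ v ∈ varsFS F, Set.ncard {u | connR F v u} ≤ k) →
        ∃ G ∈ L, equivCQ F G := by
  classical
  set N := Finset.univ.sup arity with hN
  have harN : ∀ p : P, arity p ≤ N := fun p => Finset.le_sup (Finset.mem_univ p)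
  -- the finite type of "small" atoms
  let T0 := {a : Atom P (Fin (k+1)) C // a.args.length = arity a.pred}
  haveI : Fintype T0 := by
    apply Fintype.ofInjective
      (fun a : T0 => (a.1.pred, fun i : Fin N => a.1.args[i.1]?))
    rintro ⟨⟨p, l⟩, hp⟩ ⟨⟨q, m⟩, hq⟩ h
    simp only [Prod.mk.injEq] at h
    obtain ⟨h1, h2⟩ := h
    subst h1
    refine Subtype.ext ?_
    simp only [Atom.mk.injEq, true_and]
    apply List.ext_getElem?
    intro n
    by_cases hn : n < N
    · exact congrFun h2 ⟨n, hn⟩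
    · have hpN := harN p
      change l.length = arity p at hp
      change m.length = arity p at hq
      rw [List.getElem?_eq_none (by omega), List.getElem?_eq_none (by omega)]
  -- an injective index for finsets of small atoms
  let idx : Finset T0 → ℕ := fun S => (Fintype.equivFin (Finset T0) S).val
  have hidx : Function.Injective idx := fun S S' h =>
    (Fintype.equivFin (Finset T0)).injective (Fin.ext h)
  -- lifting a finset of small atoms into its own block of naturals
  let lift : Finset T0 → Finset (Atom P ℕ C) := fun S =>
    (S.image Subtype.val).image (mapAtom (fun x : Fin (k+1) => (k+1) * idx S + x.1))
  let dec : Finset (Finset T0) → Finset (Atom P ℕ C) := fun T => T.biUnion lift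
  refine ⟨(Finset.univ : Finset (Finset (Finset T0))).image dec, ?_⟩
  intro F hlen hk
  -- connectivity facts
  have hsymm : Symmetric (connR F) :=
    haveI : Std.Symm (fun u v : ℕ => ∃ a ∈ F, u ∈ a.vars ∧ v ∈ a.vars) :=
      ⟨fun u v ⟨a, ha, h1, h2⟩ => ⟨a, ha, h2, h1⟩⟩
    fun x y (h : Relation.ReflTransGen (fun u v : ℕ => ∃ a ∈ F, u ∈ a.vars ∧ v ∈ a.vars) x y) =>
      (Relation.ReflTransGen.stdSymm (r := fun u v : ℕ => ∃ a ∈ F, u ∈ a.vars ∧ v ∈ a.vars)).symm x y h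
  have hbase : ∀ a ∈ F, ∀ u ∈ a.vars, ∀ v ∈ a.vars, connR F u v :=
    fun a ha u hu v hv => Relation.ReflTransGen.single ⟨a, ha, hu, hv⟩
  -- pieces (connected components, with each ground atom its own piece)
  let conn : Atom P ℕ C → Atom P ℕ C → Prop := fun a b =>
    a = b ∨ ∃ v ∈ a.vars, ∃ u ∈ b.vars, connR F v u
  let piece : Atom P ℕ C → Finset (Atom P ℕ C) := fun a => F.filter (conn a)
  let pieces := F.image piece
  have hpss : ∀ a, piece a ⊆ F := fun a => Finset.filter_subset _ _
  have hself : ∀ a ∈ F, a ∈ piece a := fun a ha =>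
    Finset.mem_filter.mpr ⟨ha, Or.inl rfl⟩
  have hcover : F = pieces.biUnion id := by
    ext x
    simp only [Finset.mem_biUnion, Finset.mem_image, id_eq, pieces]
    constructor
    · intro hx
      exact ⟨piece x, ⟨x, hx, rfl⟩, hself x hx⟩
    · rintro ⟨S, ⟨a, _, rfl⟩, hx⟩
      exact hpss a hx
  have hreach : ∀ a ∈ F, ∀ u, u ∈ varsFS (piece a) → ∃ v ∈ a.vars, connR F v u := by
    rintro a ha u ⟨b, hb, hub⟩
    obtain ⟨hbF, hconn⟩ := Finset.mem_filter.mp hb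
    rcases hconn with rfl | ⟨v, hv, u', hu', hvu'⟩
    · exact ⟨u, hub, Relation.ReflTransGen.refl⟩
    · exact ⟨v, hv, hvu'.trans (hbase b hbF u' hu' u hub)⟩
  have hvars_conn : ∀ a ∈ F, ∀ u ∈ varsFS (piece a), ∀ w ∈ varsFS (piece a),
      connR F u w := by
    intro a ha u hu w hw
    obtain ⟨vu, hvu, hcu⟩ := hreach a ha u hu
    obtain ⟨vw, hvw, hcw⟩ := hreach a ha w hw
    exact (hsymm hcu).trans ((hbase a ha vu hvu vw hvw).trans hcw)
  have hclass_sub : ∀ u, {w | connR F u w} ⊆ insert u (varsFS F) := by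
    intro u w hw
    rcases Relation.ReflTransGen.cases_tail hw with rfl | ⟨b, _, hbw⟩
    · exact Set.mem_insert _ _
    · obtain ⟨c, hc, _, hwc⟩ := hbw
      exact Set.mem_insert_of_mem _ ⟨c, hc, hwc⟩
  have hsize : ∀ a ∈ F, (varsFS (piece a)).ncard ≤ k := by
    intro a ha
    rcases Set.eq_empty_or_nonempty (varsFS (piece a)) with he | ⟨u, hu⟩
    · simp [he]
    · have huF : u ∈ varsFS F := varsFS_mono (hpss a) hu
      have hsub : varsFS (piece a) ⊆ {w | connR F u w} :=
        fun w hw => hvars_conn a ha u hu w hw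
      have hfin : {w | connR F u w}.Finite :=
        ((varsFS_finite F).insert u).subset (hclass_sub u)
      exact le_trans (Set.ncard_le_ncard hsub hfin) (hk u huF)
  have key : ∀ x ∈ F, ∀ y ∈ F, ∀ u, ∀ vx ∈ x.vars, ∀ vy ∈ y.vars,
      connR F vx u → connR F vy u → ∀ c ∈ piece x, c ∈ piece y := by
    intro x hxF y hyF u vx hvx vy hvy hcx hcy c hc
    obtain ⟨hcF, hconn⟩ := Finset.mem_filter.mp hc
    refine Finset.mem_filter.mpr ⟨hcF, Or.inr ?_⟩
    rcases hconn with rfl | ⟨v, hv, w, hw, hvw⟩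
    · exact ⟨vy, hvy, vx, hvx, hcy.trans (hsymm hcx)⟩
    · exact ⟨vy, hvy, w, hw,
        ((hcy.trans (hsymm hcx)).trans (hbase x hxF vx hvx v hv)).trans hvw⟩
  have hdisjF : ∀ S ∈ pieces, ∀ S' ∈ pieces, S ≠ S' →
      ∀ v, v ∈ varsFS (id S) → v ∈ varsFS (id S') → False := by
    intro S hS S' hS' hne u hu hu'
    obtain ⟨a, ha, rfl⟩ := Finset.mem_image.mp hS
    obtain ⟨b, hb, rfl⟩ := Finset.mem_image.mp hS'
    obtain ⟨va, hva, hcva⟩ := hreach a ha u hu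
    obtain ⟨vb, hvb, hcvb⟩ := hreach b hb u hu'
    exact hne (Finset.Subset.antisymm
      (fun c hc => key a ha b hb u va hva vb hvb hcva hcvb c hc)
      (fun c hc => key b hb a ha u vb hvb va hva hcvb hcva c hc))
  have hshrink : ∀ S ∈ pieces, ∃ S0 : Finset T0,
      ∀ M : Interp P C, M.satCQ (S0.image Subtype.val) ↔ M.satCQ S := by
    intro S hS
    obtain ⟨a, ha, rfl⟩ := Finset.mem_image.mp hS
    have hfin : (varsFS (piece a)).Finite :=
      (varsFS_finite F).subset (varsFS_mono (hpss a))
    haveI := hfin.fintype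
    have h1 : Fintype.card (varsFS (piece a)) = (varsFS (piece a)).ncard := by
      rw [Set.ncard_eq_toFinset_card', Set.toFinset_card]
    obtain ⟨e⟩ := Function.Embedding.nonempty_of_card_le
      (show Fintype.card (varsFS (piece a)) ≤ Fintype.card (Fin (k+1)) by
        simp only [h1, Fintype.card_fin]
        have := hsize a ha; omega)
    set ρ : ℕ → Fin (k+1) :=
      fun v => if hv : v ∈ varsFS (piece a) then e ⟨v, hv⟩ else 0 with hρdef
    have hρ : Set.InjOn ρ (varsFS (piece a)) := by
      intro x hx y hy hxy
      simp only [hρdef, dif_pos hx, dif_pos hy] at hxy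
      exact congrArg Subtype.val (e.injective hxy)
    set s : Fin (k+1) → ℕ :=
      fun x => if h : ∃ v ∈ varsFS (piece a), ρ v = x then h.choose else 0 with hsdef
    have hs : ∀ v ∈ varsFS (piece a), s (ρ v) = v := by
      intro v hv
      have hex : ∃ w ∈ varsFS (piece a), ρ w = ρ v := ⟨v, hv, rfl⟩
      simp only [hsdef, dif_pos hex]
      exact hρ hex.choose_spec.1 hv hex.choose_spec.2
    have hlenp : ∀ b ∈ piece a,
        (mapAtom (P := P) (C := C) ρ b).args.length = arity (mapAtom ρ b).pred := by
      intro b hb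
      show (b.args.map _).length = arity b.pred
      rw [List.length_map]; exact hlen b (hpss a hb)
    refine ⟨(piece a).attach.image
      (fun b => (⟨mapAtom ρ b.1, hlenp b.1 b.2⟩ : T0)), ?_⟩
    intro M
    have himg : (((piece a).attach.image
        (fun b => (⟨mapAtom ρ b.1, hlenp b.1 b.2⟩ : T0))).image Subtype.val)
        = (piece a).image (mapAtom ρ) := by
      rw [Finset.image_image]
      ext x
      simp only [Finset.mem_image, Finset.mem_attach, true_and, Function.comp]
      constructor
      · rintro ⟨b, rfl⟩
        exact ⟨b.1, b.2, rfl⟩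
      · rintro ⟨b, hb, rfl⟩
        exact ⟨⟨b, hb⟩, rfl⟩
    rw [himg]
    exact satCQ_image_map M (piece a) ρ s hs
  choose g hg using hshrink
  set T : Finset (Finset T0) := pieces.attach.image (fun S => g S.1 S.2) with hT
  refine ⟨dec T, Finset.mem_image_of_mem dec (Finset.mem_univ T), ?_⟩
  intro M
  have hlift_vars : ∀ S0 : Finset T0, ∀ v ∈ varsFS (lift S0), v / (k+1) = idx S0 := by
    intro S0 v hv
    obtain ⟨b, hb, hvb⟩ := mem_varsFS.mp hv
    obtain ⟨c, hc, rfl⟩ := Finset.mem_image.mp hb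
    obtain ⟨x, hx, rfl⟩ := mem_vars_mapAtom.mp hvb
    show ((k+1) * idx S0 + x.1) / (k+1) = idx S0
    rw [Nat.mul_add_div (Nat.succ_pos k), Nat.div_eq_of_lt x.isLt, Nat.add_zero]
  have hdisjL : ∀ S0 ∈ T, ∀ S1 ∈ T, S0 ≠ S1 →
      ∀ v, v ∈ varsFS (lift S0) → v ∈ varsFS (lift S1) → False := by
    intro S0 _ S1 _ hne v h0 h1
    exact hne (hidx ((hlift_vars S0 v h0).symm.trans (hlift_vars S1 v h1)))
  have hlift_equiv : ∀ S0 : Finset T0,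
      M.satCQ (lift S0) ↔ M.satCQ (S0.image Subtype.val) := by
    intro S0
    refine satCQ_image_map M (S0.image Subtype.val)
      (fun x : Fin (k+1) => (k+1) * idx S0 + x.1)
      (fun n => ⟨n % (k+1), Nat.mod_lt _ (Nat.succ_pos k)⟩) ?_
    intro x _
    apply Fin.ext
    show ((k+1) * idx S0 + x.1) % (k+1) = x.1
    rw [Nat.mul_add_mod]
    exact Nat.mod_eq_of_lt x.isLt
  have hL : M.satCQ F ↔ ∀ S ∈ pieces, M.satCQ S := by
    rw [show M.satCQ F = M.satCQ (pieces.biUnion id) from congrArg _ hcover]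
    simpa using satCQ_biUnion M pieces id hdisjF
  have hR : M.satCQ (dec T) ↔ ∀ S0 ∈ T, M.satCQ (lift S0) :=
    satCQ_biUnion M T lift hdisjL
  rw [hL, hR]
  constructor
  · intro h S0 hS0
    obtain ⟨⟨S, hS⟩, _, rfl⟩ := Finset.mem_image.mp hS0
    exact (hlift_equiv _).mpr ((hg S hS M).mpr (h S hS))
  · intro h S hS
    have hmem : g S hS ∈ T :=
      Finset.mem_image_of_mem _ (Finset.mem_attach _ ⟨S, hS⟩)
    exact (hg S hS M).mp ((hlift_equiv _).mp (h _ hmem))
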